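/- Let f be a complex-valued function on ℝ² and C ≥ 0. Suppose that |(f(x₁, y₂) − f(x₁, x₂))·(x₂ + i)| ≤ C·|y₂ − x₂| for all x₁, x₂, y₂ ∈ ℝ, and |(f(y₁, y₂) − f(x₁, y₂))·(x₁ + i)| ≤ C·|y₁ − x₁| for all x₁, y₁, y₂ ∈ ℝ. Then f is bounded; in fact |f(t, s)| ≤ 2C + |f(0, 0)| for all s, t ∈ ℝ. -/

import Mathlib

lemma norm_add_I_pos (s : ℝ) : 0 < ‖(s : ℂ) + Complex.I‖ := by
  rw [norm_pos_iff]
  intro h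
  have := congrArg Complex.im h
  simp at this

lemma abs_le_norm_add_I (s : ℝ) : |s| ≤ ‖(s : ℂ) + Complex.I‖ := by
  have h : ‖(s : ℂ) + Complex.I‖ = Real.sqrt (s ^ 2 + 1) := by
    rw [Complex.norm_def, Complex.normSq_apply]
    simp
    ring_nf
  rw [h]
  have : |s| = Real.sqrt (s ^ 2) := by
    rw [Real.sqrt_sq_eq_abs]
  rw [this]
  exact Real.sqrt_le_sqrt (by linarith)

/-- If `f : ℝ² → ℂ` satisfies
`|(f(x₁,y₂) − f(x₁,x₂))·(x₂+i)| ≤ C·|y₂−x₂|` and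
`|(f(y₁,y₂) − f(x₁,y₂))·(x₁+i)| ≤ C·|y₁−x₁|`, then `f` is bounded:
`|f(t,s)| ≤ 2C + |f(0,0)|` for all `s, t`. -/
theorem bounded_of_weighted_difference_bounds
    (f : ℝ × ℝ → ℂ) (C : ℝ) (hC : 0 ≤ C)
    (h1 : ∀ x₁ x₂ y₂ : ℝ,
      ‖(f (x₁, y₂) - f (x₁, x₂)) * ((x₂ : ℂ) + Complex.I)‖ ≤ C * |y₂ - x₂|)
    (h2 : ∀ x₁ y₁ y₂ : ℝ,
      ‖(f (y₁, y₂) - f (x₁, y₂)) * ((x₁ : ℂ) + Complex.I)‖ ≤ C * |y₁ - x₁|) :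
    ∀ t s : ℝ, ‖f (t, s)‖ ≤ 2 * C + ‖f (0, 0)‖ := by
  intro t s
  have key : ∀ (a : ℂ) (x : ℝ), ‖a * ((x : ℂ) + Complex.I)‖ ≤ C * |x| → ‖a‖ ≤ C := by
    intro a x h
    have hpos := norm_add_I_pos x
    have h2' : ‖a‖ * ‖(x : ℂ) + Complex.I‖ ≤ C * ‖(x : ℂ) + Complex.I‖ := by
      rw [← norm_mul]
      exact h.trans (mul_le_mul_of_nonneg_left (abs_le_norm_add_I x) hC)
    exact le_of_mul_le_mul_right h2' hpos
  have hA : ‖f (t, 0) - f (t, s)‖ ≤ C := by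
    have := h1 t s 0
    simp only [zero_sub, abs_neg] at this
    exact key _ s this
  have hB : ‖f (0, 0) - f (t, 0)‖ ≤ C := by
    have := h2 t 0 0
    simp only [zero_sub, abs_neg] at this
    exact key _ t this
  calc ‖f (t, s)‖ = ‖f (0,0) - ((f (0,0) - f (t,0)) + (f (t,0) - f (t,s)))‖ := by ring_nf
    _ ≤ ‖f (0,0)‖ + ‖(f (0,0) - f (t,0)) + (f (t,0) - f (t,s))‖ := norm_sub_le _ _
    _ ≤ ‖f (0,0)‖ + (‖f (0,0) - f (t,0)‖ + ‖f (t,0) - f (t,s)‖) := by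
        gcongr; exact norm_add_le _ _
    _ ≤ 2 * C + ‖f (0, 0)‖ := by linarith
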